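/- For open-closed intervals J = (a,b] and J' = (a',b'] of ℝ, the Euler form satisfies ⟨1_J, 1_{J'}⟩ = [a < b' ≤ b] − [a < a' ≤ b], where [P] denotes 1 if the condition P holds and 0 otherwise. In particular, ⟨1_J, 1_J⟩ = 1. -/

import Mathlib

open Set

/-- `S` is an open-closed interval `(a,b]` of `ℝ` with `a < b`. -/
def IsOC (S : Set ℝ) : Prop := ∃ a b : ℝ, a < b ∧ S = Set.Ioc a b

/-- The partial sum `J ⊕ J'` (concatenation) is defined:
`J ∩ J' = ∅` and `J ∪ J'` is an open-closed interval. -/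
def SumDef (J J' : Set ℝ) : Prop := J ∩ J' = ∅ ∧ IsOC (J ∪ J')

/-- The partial difference `J ⊖ J'` (truncation) is defined:
`J' ⊆ J` and `J \ J'` is an open-closed interval. -/
def DiffDef (J J' : Set ℝ) : Prop := J' ⊆ J ∧ IsOC (J \ J')

/-- Euler form `⟨1_{(a,b]}, 1_{(a',b']}⟩ = [a < b' ≤ b] − [a < a' ≤ b]`. -/
noncomputable def eform (a b a' b' : ℝ) : ℤ :=
  (if a < b' ∧ b' ≤ b then 1 else 0) - (if a < a' ∧ a' ≤ b then 1 else 0)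

/-- Symmetrized Euler form `(1_J, 1_{J'}) = ⟨1_J,1_{J'}⟩ + ⟨1_{J'},1_J⟩`. -/
noncomputable def sform (a b a' b' : ℝ) : ℤ := eform a b a' b' + eform a' b' a b

/-- `ξ(J,J') = (−1)^{⟨1_J,1_{J'}⟩} (1_J,1_{J'})`. -/
noncomputable def xiform (a b a' b' : ℝ) : ℤ :=
  (-1 : ℤ) ^ (eform a b a' b').natAbs * sform a b a' b'

/-- The analytic Euler form `⟨f, g⟩ = Σ_x f₋(x) (g₋(x) − g₊(x))`. -/
noncomputable def eulerForm (f g : ℝ → ℝ) : ℝ :=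
  ∑ᶠ x : ℝ, Function.leftLim f x * (Function.leftLim g x - Function.rightLim g x)

lemma ll_ind (a b x : ℝ) :
    Function.leftLim ((Set.Ioc a b).indicator (1 : ℝ → ℝ)) x
      = if a < x ∧ x ≤ b then 1 else 0 := by
  have hne : (nhdsWithin x (Set.Iio x)) ≠ ⊥ := Filter.NeBot.ne inferInstance
  split_ifs with h
  · apply leftLim_eq_of_tendsto
    apply Filter.Tendsto.congr' _ tendsto_const_nhds
    filter_upwards [Ioo_mem_nhdsLT h.1] with y hy
    simp [Set.indicator_of_mem, Set.mem_Ioc, hy.1, hy.2.le.trans h.2]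
  · apply leftLim_eq_of_tendsto
    apply Filter.Tendsto.congr' _ tendsto_const_nhds
    push_neg at h
    rcases le_or_gt x a with hx | hx
    · filter_upwards [self_mem_nhdsWithin] with y hy
      have : y ∉ Set.Ioc a b := fun hc => absurd hc.1 (not_lt.2 ((le_of_lt hy).trans hx))
      simp [Set.indicator_of_notMem this]
    · have hb : b < x := h hx
      filter_upwards [Ioo_mem_nhdsLT hb] with y hy
      have : y ∉ Set.Ioc a b := fun hc => absurd hc.2 (not_le.2 hy.1)
      simp [Set.indicator_of_notMem this]

lemma rl_ind (a b x : ℝ) :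
    Function.rightLim ((Set.Ioc a b).indicator (1 : ℝ → ℝ)) x
      = if a ≤ x ∧ x < b then 1 else 0 := by
  have hne : (nhdsWithin x (Set.Ioi x)) ≠ ⊥ := Filter.NeBot.ne inferInstance
  split_ifs with h
  · apply rightLim_eq_of_tendsto
    apply Filter.Tendsto.congr' _ tendsto_const_nhds
    filter_upwards [Ioo_mem_nhdsGT h.2] with y hy
    simp [Set.indicator_of_mem, Set.mem_Ioc, h.1.trans_lt hy.1, hy.2.le]
  · apply rightLim_eq_of_tendsto
    apply Filter.Tendsto.congr' _ tendsto_const_nhds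
    push_neg at h
    rcases lt_or_ge x a with hx | hx
    · filter_upwards [Ioo_mem_nhdsGT hx] with y hy
      have : y ∉ Set.Ioc a b := fun hc => absurd hc.1 (not_lt.2 hy.2.le)
      simp [Set.indicator_of_notMem this]
    · have hb : b ≤ x := h hx
      filter_upwards [self_mem_nhdsWithin] with y hy
      have : y ∉ Set.Ioc a b := fun hc => absurd hc.2 (not_le.2 (hb.trans_lt hy))
      simp [Set.indicator_of_notMem this]

lemma euler_ind (a b a' b' : ℝ) (hab' : a' < b') :
    eulerForm ((Set.Ioc a b).indicator 1) ((Set.Ioc a' b').indicator 1) =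
      ((if a < b' ∧ b' ≤ b then 1 else 0) - (if a < a' ∧ a' ≤ b then 1 else 0) : ℝ) := by
  have hfun : ∀ x : ℝ,
      Function.leftLim ((Set.Ioc a b).indicator (1 : ℝ → ℝ)) x *
        (Function.leftLim ((Set.Ioc a' b').indicator (1 : ℝ → ℝ)) x -
          Function.rightLim ((Set.Ioc a' b').indicator (1 : ℝ → ℝ)) x) =
      (if a < x ∧ x ≤ b then (1:ℝ) else 0) *
        ((if a' < x ∧ x ≤ b' then (1:ℝ) else 0) - (if a' ≤ x ∧ x < b' then (1:ℝ) else 0)) := by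
    intro x; rw [ll_ind, ll_ind, rl_ind]
  rw [eulerForm]
  rw [finsum_congr hfun]
  have hsupp : (Function.support fun x : ℝ =>
      (if a < x ∧ x ≤ b then (1:ℝ) else 0) *
        ((if a' < x ∧ x ≤ b' then (1:ℝ) else 0) - (if a' ≤ x ∧ x < b' then (1:ℝ) else 0)))
      ⊆ ({a', b'} : Finset ℝ) := by
    intro x hx
    simp only [Function.mem_support] at hx
    by_contra hmem
    simp only [Finset.coe_insert, Finset.coe_singleton, Set.mem_insert_iff,
      Set.mem_singleton_iff, not_or] at hmem
    apply hx
    have h1 : (a' < x ∧ x ≤ b') ↔ (a' ≤ x ∧ x < b') := by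
      constructor
      · rintro ⟨h1, h2⟩; exact ⟨h1.le, lt_of_le_of_ne h2 hmem.2⟩
      · rintro ⟨h1, h2⟩; exact ⟨lt_of_le_of_ne h1 (Ne.symm hmem.1), h2.le⟩
    rw [if_congr h1 rfl rfl, sub_self, mul_zero]
  rw [finsum_eq_finset_sum_of_support_subset _ hsupp]
  rw [Finset.sum_pair hab'.ne]
  have e1 : (if a' < a' ∧ a' ≤ b' then (1:ℝ) else 0) = 0 := by simp
  have e2 : (if a' ≤ a' ∧ a' < b' then (1:ℝ) else 0) = 1 := by simp [hab']
  have e3 : (if a' < b' ∧ b' ≤ b' then (1:ℝ) else 0) = 1 := by simp [hab']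
  have e4 : (if a' ≤ b' ∧ b' < b' then (1:ℝ) else 0) = 0 := by simp
  rw [e1, e2, e3, e4]
  ring

theorem stmt_2 (a b a' b' : ℝ) (hab : a < b) (hab' : a' < b') :
    eulerForm ((Set.Ioc a b).indicator 1) ((Set.Ioc a' b').indicator 1) =
      ((if a < b' ∧ b' ≤ b then 1 else 0) - (if a < a' ∧ a' ≤ b then 1 else 0) : ℝ) ∧
    eulerForm ((Set.Ioc a b).indicator 1) ((Set.Ioc a b).indicator 1) = 1 := by
  refine ⟨euler_ind a b a' b' hab', ?_⟩
  rw [euler_ind a b a b hab]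
  simp [hab, le_refl, not_lt.2 hab.le]
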